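/- Let K_l and K_{l−1} be Markov kernels on X with invariant probabilities π_l and π_{l−1}. Assume: (i) uniform ergodicity sup_x ‖K_j^n(x,·) − π_j‖_TV ≤ C ρ^n for j ∈ {l−1, l}; (ii) |[π_l − π_{l−1}](φ)| ≤ C ‖φ‖_∞ h^β and sup_x |K_l(φ)(x) − K_{l−1}(φ)(x)| ≤ C ‖φ‖_∞ h^β for all bounded measurable φ. Then the Poisson solutions φ̂_l, φ̂_{l−1} satisfy sup_x |φ̂_l(x) − φ̂_{l−1}(x)| ≤ C' ‖φ‖_∞ h^β for a constant C' not depending on l, h, or φ. -/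

import Mathlib

open MeasureTheory ProbabilityTheory

/-- `n`-th iterate of a Markov kernel, with `kIter K 0 = id`. -/
noncomputable def kIter {X : Type*} [MeasurableSpace X] (K : Kernel X X) : ℕ → Kernel X X
  | 0 => Kernel.id
  | n + 1 => K ∘ₖ kIter K n

section PoissonAux
variable {X : Type*} [MeasurableSpace X]

lemma bddIntegrable (μ : Measure X) [IsProbabilityMeasure μ] {φ : X → ℝ} {B : ℝ}
    (hm : Measurable φ) (hb : ∀ x, |φ x| ≤ B) : Integrable φ μ :=
  (integrable_const B).mono' hm.aestronglyMeasurable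
    (Filter.Eventually.of_forall fun x => by simpa [Real.norm_eq_abs] using hb x)

lemma abs_integral_le (μ : Measure X) [IsProbabilityMeasure μ] {φ : X → ℝ} {B : ℝ}
    (hb : ∀ x, |φ x| ≤ B) : |∫ y, φ y ∂μ| ≤ B := by
  have := norm_integral_le_of_norm_le (μ := μ) (f := φ) (integrable_const B)
    (Filter.Eventually.of_forall fun x => by simpa [Real.norm_eq_abs] using hb x)
  simpa [Real.norm_eq_abs] using this

lemma abs_integral_sub_le_tv [Nonempty X] (μ ν : Measure X) [IsProbabilityMeasure μ]
    [IsProbabilityMeasure ν] {φ : X → ℝ} {B ε : ℝ}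
    (hm : Measurable φ) (hb : ∀ x, |φ x| ≤ B) (hε : 0 ≤ ε)
    (htv : ∀ s : Set X, MeasurableSet s → |(μ s).toReal - (ν s).toReal| ≤ ε) :
    |(∫ y, φ y ∂μ) - ∫ y, φ y ∂ν| ≤ 2 * B * ε := by
  have hB : 0 ≤ B := le_trans (abs_nonneg _) (hb (Classical.arbitrary X))
  set g : X → ℝ := fun x => φ x + B with hg
  have hgm : Measurable g := hm.add_const B
  have hgb : ∀ x, |g x| ≤ 2 * B := fun x => by
    have h1 := abs_le.1 (hb x)
    simp only [hg, abs_le]; constructor <;> linarith [h1.1, h1.2]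
  have hgnn : ∀ x, 0 ≤ g x := fun x => by
    have h1 := abs_le.1 (hb x); simp only [hg]; linarith [h1.1]
  have hgle : ∀ x, g x ≤ 2 * B := fun x => (abs_le.1 (hgb x)).2
  have key : ∀ (m : Measure X), IsProbabilityMeasure m →
      ∫ y, g y ∂m = ∫ t in Set.Ioi (0:ℝ), ((m {a | t < g a}).toReal) := by
    intro m hmprob
    exact (bddIntegrable m hgm hgb).integral_eq_integral_meas_lt
      (Filter.Eventually.of_forall hgnn)
  set F : ℝ → ℝ := fun t => (μ {a | t < g a}).toReal with hF
  set G : ℝ → ℝ := fun t => (ν {a | t < g a}).toReal with hG'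
  have hanti : ∀ (m : Measure X), IsProbabilityMeasure m →
      Antitone (fun t : ℝ => (m {a | t < g a}).toReal) := by
    intro m hmp s t hst
    apply (ENNReal.toReal_le_toReal (measure_ne_top _ _) (measure_ne_top _ _)).2
    exact measure_mono fun a ha => lt_of_le_of_lt hst ha
  have hz : ∀ (m : Measure X), ∀ t : ℝ, 2 * B ≤ t → (m {a | t < g a}).toReal = 0 := by
    intro m t ht
    have : {a | t < g a} = ∅ := by
      ext a; simp only [Set.mem_setOf_eq, Set.mem_empty_iff_false, iff_false, not_lt]
      exact le_trans (hgle a) ht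
    simp [this]
  have h1' : ∀ (m : Measure X), IsProbabilityMeasure m →
      ∀ t : ℝ, (m {a | t < g a}).toReal ≤ 1 := by
    intro m hmp t
    simpa using (ENNReal.toReal_le_toReal (measure_ne_top _ _) ENNReal.one_ne_top).2
      (prob_le_one (μ := m) (s := {a | t < g a}))
  have hind : Integrable (Set.indicator (Set.Ioc (0:ℝ) (2*B)) (fun _ => (1:ℝ)))
      (volume.restrict (Set.Ioi (0:ℝ))) := by
    rw [integrable_indicator_iff measurableSet_Ioc]
    exact integrableOn_const
      (lt_of_le_of_lt (Measure.restrict_apply_le _ _) measure_Ioc_lt_top).ne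
  have hboundInd : ∀ (m : Measure X), IsProbabilityMeasure m → ∀ t ∈ Set.Ioi (0:ℝ),
      ‖(m {a | t < g a}).toReal‖ ≤ Set.indicator (Set.Ioc (0:ℝ) (2*B)) (fun _ => (1:ℝ)) t := by
    intro m hmp t ht
    rw [Real.norm_eq_abs, abs_of_nonneg ENNReal.toReal_nonneg]
    by_cases hle : t ≤ 2 * B
    · rw [Set.indicator_of_mem (Set.mem_Ioc.2 ⟨Set.mem_Ioi.1 ht, hle⟩) (fun _ => (1:ℝ))]
      exact h1' m hmp t
    · rw [hz m t (le_of_lt (not_le.1 hle))]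
      exact Set.indicator_nonneg (fun _ _ => zero_le_one) t
  have hFint : Integrable F (volume.restrict (Set.Ioi (0:ℝ))) :=
    hind.mono' ((hanti μ inferInstance).measurable).aestronglyMeasurable
      ((ae_restrict_iff' measurableSet_Ioi).2
        (Filter.Eventually.of_forall (hboundInd μ inferInstance)))
  have hGint : Integrable G (volume.restrict (Set.Ioi (0:ℝ))) :=
    hind.mono' ((hanti ν inferInstance).measurable).aestronglyMeasurable
      ((ae_restrict_iff' measurableSet_Ioi).2
        (Filter.Eventually.of_forall (hboundInd ν inferInstance)))
  have hint_eq : (∫ y, φ y ∂μ) - ∫ y, φ y ∂ν = (∫ y, g y ∂μ) - ∫ y, g y ∂ν := by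
    have h1 : ∫ y, g y ∂μ = (∫ y, φ y ∂μ) + B := by
      rw [hg, integral_add (bddIntegrable μ hm hb) (integrable_const B)]
      simp
    have h2 : ∫ y, g y ∂ν = (∫ y, φ y ∂ν) + B := by
      rw [hg, integral_add (bddIntegrable ν hm hb) (integrable_const B)]
      simp
    rw [h1, h2]; ring
  rw [hint_eq, key μ inferInstance, key ν inferInstance, ← integral_sub hFint hGint]
  have hptbd : ∀ t ∈ Set.Ioi (0:ℝ),
      ‖F t - G t‖ ≤ Set.indicator (Set.Ioc (0:ℝ) (2*B)) (fun _ => ε) t := by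
    intro t ht
    by_cases hle : t ≤ 2 * B
    · rw [Set.indicator_of_mem (Set.mem_Ioc.2 ⟨Set.mem_Ioi.1 ht, hle⟩) (fun _ => ε),
        Real.norm_eq_abs]
      exact htv _ (measurableSet_lt measurable_const hgm)
    · rw [Real.norm_eq_abs]
      simp only [hF, hG']
      rw [hz μ t (le_of_lt (not_le.1 hle)), hz ν t (le_of_lt (not_le.1 hle))]
      simp only [sub_self, abs_zero]
      exact Set.indicator_nonneg (fun _ _ => hε) t
  have hindε : Integrable (Set.indicator (Set.Ioc (0:ℝ) (2*B)) (fun _ => ε))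
      (volume.restrict (Set.Ioi (0:ℝ))) := by
    rw [integrable_indicator_iff measurableSet_Ioc]
    exact integrableOn_const
      (lt_of_le_of_lt (Measure.restrict_apply_le _ _) measure_Ioc_lt_top).ne
  calc |∫ t in Set.Ioi (0:ℝ), (F t - G t)|
      ≤ ∫ t in Set.Ioi (0:ℝ), Set.indicator (Set.Ioc (0:ℝ) (2*B)) (fun _ => ε) t := by
        rw [← Real.norm_eq_abs]
        exact norm_integral_le_of_norm_le hindε
          ((ae_restrict_iff' measurableSet_Ioi).2 (Filter.Eventually.of_forall hptbd))
    _ ≤ 2 * B * ε := by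
        rw [setIntegral_indicator measurableSet_Ioc]
        have hIS : Set.Ioi (0:ℝ) ∩ Set.Ioc 0 (2*B) = Set.Ioc 0 (2*B) := by
          ext t; simp only [Set.mem_inter_iff, Set.mem_Ioc, Set.mem_Ioi]
          exact ⟨fun h => h.2, fun h => ⟨h.1, h⟩⟩
        rw [hIS, setIntegral_const, Real.volume_real_Ioc_of_le (by linarith : (0:ℝ) ≤ 2*B), smul_eq_mul]
        ring_nf
        exact le_refl _

instance kIter_isMarkov (K : Kernel X X) [IsMarkovKernel K] (n : ℕ) :
    IsMarkovKernel (kIter K n) := by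
  induction n with
  | zero => exact (by rw [kIter]; infer_instance)
  | succ n ih => rw [kIter]; infer_instance

lemma bind_eq_map_snd (μ : Measure X) [SFinite μ] (κ : Kernel X X) [IsSFiniteKernel κ] :
    μ.bind κ = (μ.compProd κ).map Prod.snd := by
  ext s hs
  rw [Measure.bind_apply hs κ.measurable.aemeasurable,
    Measure.map_apply measurable_snd hs,
    Measure.compProd_apply (measurable_snd hs)]
  rfl

lemma integral_bind_of_bdd (μ : Measure X) [IsProbabilityMeasure μ] (κ : Kernel X X)
    [IsMarkovKernel κ] {φ : X → ℝ} {B : ℝ} (hm : Measurable φ) (hb : ∀ x, |φ x| ≤ B) :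
    ∫ y, φ y ∂(μ.bind κ) = ∫ x, ∫ y, φ y ∂(κ x) ∂μ := by
  rw [bind_eq_map_snd,
    integral_map measurable_snd.aemeasurable hm.aestronglyMeasurable]
  exact Measure.integral_compProd
    (bddIntegrable _ (hm.comp measurable_snd) (fun p => hb p.2))

lemma kOp_meas (κ : Kernel X X) [IsSFiniteKernel κ] {φ : X → ℝ} (hm : Measurable φ) :
    Measurable (fun x => ∫ y, φ y ∂(κ x)) := by
  have : StronglyMeasurable (Function.uncurry fun (_ : X) (y : X) => φ y) :=
    (hm.comp measurable_snd).stronglyMeasurable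
  exact (this.integral_kernel_prod_right (κ := κ)).measurable

lemma kOp_bdd (κ : Kernel X X) [IsMarkovKernel κ] {φ : X → ℝ} {B : ℝ}
    (hb : ∀ x, |φ x| ≤ B) (x : X) : |∫ y, φ y ∂(κ x)| ≤ B :=
  abs_integral_le (κ x) hb

lemma kIter_zero_integral (K : Kernel X X) {φ : X → ℝ} (hm : Measurable φ) (x : X) :
    ∫ y, φ y ∂(kIter K 0 x) = φ x := by
  rw [kIter]
  show ∫ y, φ y ∂(Kernel.deterministic id measurable_id x) = φ x
  rw [Kernel.deterministic_apply, integral_dirac' _ _ hm.stronglyMeasurable]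
  simp

lemma kIter_succ_integral (K : Kernel X X) [IsMarkovKernel K] (n : ℕ) {φ : X → ℝ} {B : ℝ}
    (hm : Measurable φ) (hb : ∀ x, |φ x| ≤ B) (x : X) :
    ∫ y, φ y ∂(kIter K (n+1) x) = ∫ z, (∫ y, φ y ∂(K z)) ∂(kIter K n x) := by
  have : kIter K (n+1) x = ((kIter K n) x).bind K := by
    rw [kIter, Kernel.comp_apply]
  rw [this, integral_bind_of_bdd _ _ hm hb]

/-- recursion the other way: apply `K` outermost. -/
lemma kIter_succ_integral' (K : Kernel X X) [IsMarkovKernel K] (n : ℕ) {φ : X → ℝ} {B : ℝ}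
    (hm : Measurable φ) (hb : ∀ x, |φ x| ≤ B) (x : X) :
    ∫ y, φ y ∂(kIter K (n+1) x) = ∫ z, (∫ y, φ y ∂(kIter K n z)) ∂(K x) := by
  induction n generalizing φ B with
  | zero =>
    rw [kIter_succ_integral K 0 hm hb]
    rw [kIter_zero_integral K (kOp_meas K hm)]
    exact integral_congr_ae (Filter.Eventually.of_forall fun z =>
      (kIter_zero_integral K hm z).symm)
  | succ n ih =>
    rw [kIter_succ_integral K (n+1) hm hb,
      ih (kOp_meas K hm) (kOp_bdd K hb)]
    exact integral_congr_ae (Filter.Eventually.of_forall fun z => by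
      show ∫ y, (∫ w, φ w ∂(K y)) ∂(kIter K n z) = ∫ y, φ y ∂(kIter K (n+1) z)
      rw [kIter_succ_integral K n hm hb])

lemma kIter_invariant (K : Kernel X X) [IsMarkovKernel K] (π : Measure X)
    [IsProbabilityMeasure π] (hinv : π.bind K = π) (n : ℕ) :
    ∀ (φ : X → ℝ) (B : ℝ), Measurable φ → (∀ x, |φ x| ≤ B) →
      ∫ x, (∫ y, φ y ∂(kIter K n x)) ∂π = ∫ y, φ y ∂π := by
  induction n with
  | zero =>
    intro φ B hm hb
    exact integral_congr_ae (Filter.Eventually.of_forall fun x =>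
      kIter_zero_integral K hm x)
  | succ n ih =>
    intro φ B hm hb
    have h1 : ∫ x, (∫ y, φ y ∂(kIter K (n+1) x)) ∂π
        = ∫ x, (∫ z, (∫ y, φ y ∂(K z)) ∂(kIter K n x)) ∂π :=
      integral_congr_ae (Filter.Eventually.of_forall fun x =>
        kIter_succ_integral K n hm hb x)
    rw [h1, ih _ B (kOp_meas K hm) (kOp_bdd K hb),
      ← integral_bind_of_bdd π K hm hb, hinv]

lemma ergodic_fn [Nonempty X] (K : Kernel X X) [IsMarkovKernel K] (π : Measure X)
    [IsProbabilityMeasure π] {C ρ : ℝ} (hC : 0 ≤ C) (hρ0 : 0 < ρ) (hρ1 : ρ < 1)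
    (htv : ∀ n, 1 ≤ n → ∀ x : X, ∀ s : Set X, MeasurableSet s →
      |((kIter K n) x s).toReal - (π s).toReal| ≤ C * ρ ^ n)
    {φ : X → ℝ} {B : ℝ} (hm : Measurable φ) (hb : ∀ x, |φ x| ≤ B) :
    ∀ (n : ℕ) (x : X), |(∫ y, φ y ∂(kIter K n x)) - ∫ y, φ y ∂π|
      ≤ 2 * (C + 1) * B * ρ ^ n := by
  have hB : 0 ≤ B := le_trans (abs_nonneg _) (hb (Classical.arbitrary X))
  intro n x
  rcases Nat.eq_zero_or_pos n with hn | hn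
  · subst hn
    have h1 : |∫ y, φ y ∂(kIter K 0 x)| ≤ B := abs_integral_le _ hb
    have h2 : |∫ y, φ y ∂π| ≤ B := abs_integral_le _ hb
    calc |(∫ y, φ y ∂(kIter K 0 x)) - ∫ y, φ y ∂π|
        ≤ |∫ y, φ y ∂(kIter K 0 x)| + |∫ y, φ y ∂π| := abs_sub _ _
      _ ≤ B + B := add_le_add h1 h2
      _ ≤ 2 * (C + 1) * B * ρ ^ 0 := by simp; nlinarith
  · have := abs_integral_sub_le_tv (kIter K n x) π hm hb
      (by positivity : (0:ℝ) ≤ C * ρ ^ n) (fun s hs => htv n hn x s hs)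
    calc |(∫ y, φ y ∂(kIter K n x)) - ∫ y, φ y ∂π| ≤ 2 * B * (C * ρ ^ n) := this
      _ ≤ 2 * (C + 1) * B * ρ ^ n := by nlinarith [pow_nonneg hρ0.le n]

end PoissonAux

/-- closeness of the Poisson solutions at consecutive levels.
The constant `C'` depends only on `C`, `ρ` and `β` (not on the kernels, on `h`,
or on `φ`). -/
theorem poisson_solutions_close
    (C ρ β : ℝ) (hC : 0 ≤ C) (hρ : ρ ∈ Set.Ioo (0 : ℝ) 1) (hβ : 0 < β) :
    ∃ C' : ℝ, 0 ≤ C' ∧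
      ∀ (X : Type) (_ : MeasurableSpace X)
        (Kl Klm1 : Kernel X X), IsMarkovKernel Kl → IsMarkovKernel Klm1 →
      ∀ (πl πlm1 : Measure X), IsProbabilityMeasure πl → IsProbabilityMeasure πlm1 →
        πl.bind Kl = πl → πlm1.bind Klm1 = πlm1 →
      ∀ (h : ℝ), h ∈ Set.Ioo (0 : ℝ) 1 →
      -- (i) uniform ergodicity for both kernels
      (∀ n, 1 ≤ n → ∀ x : X, ∀ s : Set X, MeasurableSet s →
        |((kIter Kl n) x s).toReal - (πl s).toReal| ≤ C * ρ ^ n) →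
      (∀ n, 1 ≤ n → ∀ x : X, ∀ s : Set X, MeasurableSet s →
        |((kIter Klm1 n) x s).toReal - (πlm1 s).toReal| ≤ C * ρ ^ n) →
      -- (ii) perturbation bounds
      (∀ (φ : X → ℝ) (B : ℝ), Measurable φ → (∀ x, |φ x| ≤ B) →
        |(∫ y, φ y ∂πl) - ∫ y, φ y ∂πlm1| ≤ C * B * h ^ β) →
      (∀ (φ : X → ℝ) (B : ℝ), Measurable φ → (∀ x, |φ x| ≤ B) →
        ∀ x : X, |(∫ y, φ y ∂(Kl x)) - ∫ y, φ y ∂(Klm1 x)| ≤ C * B * h ^ β) →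
      ∀ (φ : X → ℝ) (B : ℝ), Measurable φ → (∀ x, |φ x| ≤ B) →
      ∀ x : X,
        |(∑' n : ℕ, ((∫ y, φ y ∂((kIter Kl n) x)) - ∫ y, φ y ∂πl))
          - ∑' n : ℕ, ((∫ y, φ y ∂((kIter Klm1 n) x)) - ∫ y, φ y ∂πlm1)|
        ≤ C' * B * h ^ β := by
  obtain ⟨hρ0, hρ1⟩ := hρ
  have h1ρ : (0:ℝ) < 1 - ρ := by linarith
  refine ⟨4*C*(C+1)^2 * ((1-ρ)^2)⁻¹ + 2*C*(C+1) * (1-ρ)⁻¹, by positivity, ?_⟩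
  intro X mX Kl Klm1 hKl hKlm1 πl πlm1 hπl hπlm1 hinvl hinvm h hh htvl htvm hpert1 hpert2
    φ B hφm hφb x
  haveI := hKl; haveI := hKlm1; haveI := hπl; haveI := hπlm1
  have hne : Nonempty X := by
    by_contra hc
    rw [not_nonempty_iff] at hc
    have h1 : πl Set.univ = 1 := measure_univ
    rw [Set.univ_eq_empty_iff.2 hc, measure_empty] at h1
    exact zero_ne_one h1
  haveI := hne
  have hB : 0 ≤ B := le_trans (abs_nonneg _) (hφb (Classical.arbitrary X))
  have hhβ : 0 < h ^ β := Real.rpow_pos_of_pos hh.1 β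
  -- notation
  set πφl : ℝ := ∫ y, φ y ∂πl with hπφl
  set πφm : ℝ := ∫ y, φ y ∂πlm1 with hπφm
  set Gn : ℕ → X → ℝ := fun n y => ∫ z, φ z ∂(kIter Klm1 n y) with hGn
  set Fn : ℕ → X → ℝ := fun n y => ∫ z, φ z ∂(kIter Kl n y) with hFn
  have hGm : ∀ n, Measurable (Gn n) := fun n => kOp_meas (kIter Klm1 n) hφm
  have hGb : ∀ n y, |Gn n y| ≤ B := fun n y => kOp_bdd (kIter Klm1 n) hφb y
  have hFm : ∀ n, Measurable (Fn n) := fun n => kOp_meas (kIter Kl n) hφm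
  have hFb : ∀ n y, |Fn n y| ≤ B := fun n y => kOp_bdd (kIter Kl n) hφb y
  -- centered functions for level l-1
  set cg : ℕ → X → ℝ := fun n y => Gn n y - πφm with hcg
  have hcgm : ∀ n, Measurable (cg n) := fun n => (hGm n).sub_const _
  have hcgb : ∀ n y, |cg n y| ≤ 2*(C+1)*B*ρ^n := fun n y =>
    ergodic_fn Klm1 πlm1 hC hρ0 hρ1 htvm hφm hφb n y
  -- the difference functions d j
  set d : ℕ → X → ℝ := fun j y => (∫ z, Gn j z ∂(Kl y)) - ∫ z, Gn j z ∂(Klm1 y) with hd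
  have hdm : ∀ j, Measurable (d j) := fun j =>
    (kOp_meas Kl (hGm j)).sub (kOp_meas Klm1 (hGm j))
  set M : ℝ := 2*C*(C+1)*B*h^β with hM
  have hM0 : 0 ≤ M := by positivity
  have hd_eq : ∀ j y, d j y = (∫ z, cg j z ∂(Kl y)) - ∫ z, cg j z ∂(Klm1 y) := by
    intro j y
    have e1 : ∫ z, cg j z ∂(Kl y) = (∫ z, Gn j z ∂(Kl y)) - πφm := by
      rw [hcg]
      rw [integral_sub (bddIntegrable _ (hGm j) (hGb j)) (integrable_const _)]
      simp
    have e2 : ∫ z, cg j z ∂(Klm1 y) = (∫ z, Gn j z ∂(Klm1 y)) - πφm := by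
      rw [hcg]
      rw [integral_sub (bddIntegrable _ (hGm j) (hGb j)) (integrable_const _)]
      simp
    rw [e1, e2, hd]; ring
  have hd_bdd : ∀ j y, |d j y| ≤ M * ρ^j := by
    intro j y
    rw [hd_eq j y]
    calc |(∫ z, cg j z ∂(Kl y)) - ∫ z, cg j z ∂(Klm1 y)|
        ≤ C * (2*(C+1)*B*ρ^j) * h^β := hpert2 (cg j) _ (hcgm j) (fun z => hcgb j z) y
      _ = M * ρ^j := by rw [hM]; ring
  -- s j and the telescoping of πl-integrals of d
  set s : ℕ → ℝ := fun j => ∫ y, Gn j y ∂πl with hs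
  have hGsucc : ∀ j y, ∫ z, Gn j z ∂(Klm1 y) = Gn (j+1) y := by
    intro j y
    rw [hGn]
    exact (kIter_succ_integral' Klm1 j hφm hφb y).symm
  have hπd : ∀ j, ∫ y, d j y ∂πl = s j - s (j+1) := by
    intro j
    have hsplit : ∫ y, d j y ∂πl
        = (∫ y, (∫ z, Gn j z ∂(Kl y)) ∂πl) - ∫ y, (∫ z, Gn j z ∂(Klm1 y)) ∂πl := by
      rw [hd]
      exact integral_sub
        (bddIntegrable _ (kOp_meas Kl (hGm j)) (fun y => kOp_bdd Kl (hGb j) y))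
        (bddIntegrable _ (kOp_meas Klm1 (hGm j)) (fun y => kOp_bdd Klm1 (hGb j) y))
    rw [hsplit]
    have e1 : ∫ y, (∫ z, Gn j z ∂(Kl y)) ∂πl = s j := by
      rw [← integral_bind_of_bdd πl Kl (hGm j) (hGb j), hinvl, hs]
    have e2 : ∫ y, (∫ z, Gn j z ∂(Klm1 y)) ∂πl = s (j+1) := by
      rw [hs]
      exact integral_congr_ae (Filter.Eventually.of_forall fun y => hGsucc j y)
    rw [e1, e2]
  -- telescoping identity
  have htel : ∀ n y, Fn n y - Gn n y
      = ∑ j ∈ Finset.range n, ∫ z, d j z ∂(kIter Kl (n-1-j) y) := by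
    intro n
    induction n with
    | zero =>
      intro y
      simp only [hFn, hGn, Finset.range_zero, Finset.sum_empty]
      rw [kIter_zero_integral Kl hφm y, kIter_zero_integral Klm1 hφm y]
      ring
    | succ n ih =>
      intro y
      have e1 : Fn (n+1) y = ∫ z, Fn n z ∂(Kl y) := by
        rw [hFn]; exact kIter_succ_integral' Kl n hφm hφb y
      have e2 : Gn (n+1) y = (∫ z, Gn n z ∂(Kl y)) - d n y := by
        rw [hd]
        have := hGsucc n y
        simp only [this]; ring
      have e3 : ∫ z, Fn n z ∂(Kl y) - ∫ z, Gn n z ∂(Kl y)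
          = ∫ z, (Fn n z - Gn n z) ∂(Kl y) :=
        (integral_sub (bddIntegrable _ (hFm n) (hFb n))
          (bddIntegrable _ (hGm n) (hGb n))).symm
      have e4 : ∫ z, (Fn n z - Gn n z) ∂(Kl y)
          = ∑ j ∈ Finset.range n, ∫ z, (∫ w, d j w ∂(kIter Kl (n-1-j) z)) ∂(Kl y) := by
        rw [integral_congr_ae (Filter.Eventually.of_forall fun z => ih z)]
        exact integral_finset_sum _ (fun j _ =>
          bddIntegrable _ (kOp_meas (kIter Kl (n-1-j)) (hdm j))
            (fun z => kOp_bdd (kIter Kl (n-1-j)) (hd_bdd j) z))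
      have e5 : ∀ j, j < n → ∫ z, (∫ w, d j w ∂(kIter Kl (n-1-j) z)) ∂(Kl y)
          = ∫ w, d j w ∂(kIter Kl (n-j) y) := by
        intro j hj
        have hidx : n - j = (n - 1 - j) + 1 := by omega
        rw [hidx]
        exact (kIter_succ_integral' Kl (n-1-j) (hdm j) (hd_bdd j) y).symm
      calc Fn (n+1) y - Gn (n+1) y
          = (∫ z, Fn n z ∂(Kl y) - ∫ z, Gn n z ∂(Kl y)) + d n y := by
            rw [e1, e2]; ring
        _ = (∑ j ∈ Finset.range n, ∫ z, (∫ w, d j w ∂(kIter Kl (n-1-j) z)) ∂(Kl y))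
              + d n y := by rw [e3, e4]
        _ = (∑ j ∈ Finset.range n, ∫ w, d j w ∂(kIter Kl (n-j) y)) + d n y := by
            rw [Finset.sum_congr rfl (fun j hj => e5 j (Finset.mem_range.1 hj))]
        _ = ∑ j ∈ Finset.range (n+1), ∫ w, d j w ∂(kIter Kl ((n+1)-1-j) y) := by
            rw [Finset.sum_range_succ]
            have hlast : ∫ w, d n w ∂(kIter Kl ((n+1)-1-n) y) = d n y := by
              have : (n+1)-1-n = 0 := by omega
              rw [this]
              exact kIter_zero_integral Kl (hdm n) y
            rw [hlast]
            congr 1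
  -- E bounds
  set M' : ℝ := 2*(C+1)*M with hM'
  have hM'0 : 0 ≤ M' := by rw [hM']; positivity
  have hE : ∀ k j, |(∫ y, d j y ∂(kIter Kl k x)) - ∫ y, d j y ∂πl| ≤ M' * ρ^(k+j) := by
    intro k j
    have hMρ : 0 ≤ M * ρ^j := by positivity
    calc |(∫ y, d j y ∂(kIter Kl k x)) - ∫ y, d j y ∂πl|
        ≤ 2*(C+1)*(M*ρ^j)*ρ^k :=
          ergodic_fn Kl πl hC hρ0 hρ1 htvl (hdm j) (hd_bdd j) k x
      _ = M' * ρ^(k+j) := by rw [hM', pow_add]; ring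
  -- the remainder r n
  set r : ℕ → ℝ := fun n => πφm - s n with hr_def
  have hterm : ∀ n, (Fn n x - πφl) - (Gn n x - πφm)
      = (∑ j ∈ Finset.range n,
          ((∫ y, d j y ∂(kIter Kl (n-1-j) x)) - ∫ y, d j y ∂πl)) + r n := by
    intro n
    have h2 : ∑ j ∈ Finset.range n, ∫ y, d j y ∂πl = s 0 - s n := by
      rw [← Finset.sum_range_sub' (fun j => s j) n]
      exact Finset.sum_congr rfl fun j _ => hπd j
    have hs0 : s 0 = πφl := by
      rw [hs, hπφl]
      refine integral_congr_ae (Filter.Eventually.of_forall fun y => ?_)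
      show Gn 0 y = φ y
      rw [hGn]
      exact kIter_zero_integral Klm1 hφm y
    have h3 : ∑ j ∈ Finset.range n,
        ((∫ y, d j y ∂(kIter Kl (n-1-j) x)) - ∫ y, d j y ∂πl)
        = (Fn n x - Gn n x) - (s 0 - s n) := by
      rw [Finset.sum_sub_distrib, ← htel n x, h2]
    rw [h3, hs0, hr_def]; ring
  have hπφm_inv : ∀ n, ∫ y, Gn n y ∂πlm1 = πφm := fun n =>
    kIter_invariant Klm1 πlm1 hinvm n φ B hφm hφb
  have hr_bdd : ∀ n, |r n| ≤ M * ρ^n := by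
    intro n
    have e1 : ∫ y, cg n y ∂πlm1 = 0 := by
      rw [hcg]
      rw [integral_sub (bddIntegrable _ (hGm n) (hGb n)) (integrable_const _)]
      rw [hπφm_inv n]
      simp
    have e2 : ∫ y, cg n y ∂πl = s n - πφm := by
      rw [hcg]
      rw [integral_sub (bddIntegrable _ (hGm n) (hGb n)) (integrable_const _)]
      rw [hs]
      simp
    have e3 : r n = -((∫ y, cg n y ∂πl) - ∫ y, cg n y ∂πlm1) := by
      rw [e1, e2, hr_def]; ring
    calc |r n| = |(∫ y, cg n y ∂πl) - ∫ y, cg n y ∂πlm1| := by rw [e3, abs_neg]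
      _ ≤ C * (2*(C+1)*B*ρ^n) * h^β := hpert1 (cg n) _ (hcgm n) (fun z => hcgb n z)
      _ = M * ρ^n := by rw [hM]; ring
  -- the two series
  set A : ℕ → ℝ := fun n => Fn n x - πφl with hA_def
  set Bq : ℕ → ℝ := fun n => Gn n x - πφm with hBq_def
  have hA_bdd : ∀ n, |A n| ≤ 2*(C+1)*B*ρ^n := fun n =>
    ergodic_fn Kl πl hC hρ0 hρ1 htvl hφm hφb n x
  have hBq_bdd : ∀ n, |Bq n| ≤ 2*(C+1)*B*ρ^n := fun n =>
    ergodic_fn Klm1 πlm1 hC hρ0 hρ1 htvm hφm hφb n x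
  have hgeo : Summable (fun n : ℕ => 2*(C+1)*B*ρ^n) :=
    (summable_geometric_of_lt_one hρ0.le hρ1).mul_left _
  have hA_summ : Summable A :=
    Summable.of_norm_bounded hgeo (fun n => by
      rw [Real.norm_eq_abs]; exact hA_bdd n)
  have hBq_summ : Summable Bq :=
    Summable.of_norm_bounded hgeo (fun n => by
      rw [Real.norm_eq_abs]; exact hBq_bdd n)
  -- per-term bound
  have habs_term : ∀ n, |A n - Bq n| ≤ M' * ((n:ℝ) * ρ^(n-1)) + M * ρ^n := by
    intro n
    have hsumE : |∑ j ∈ Finset.range n,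
        ((∫ y, d j y ∂(kIter Kl (n-1-j) x)) - ∫ y, d j y ∂πl)|
        ≤ (n:ℝ) * (M' * ρ^(n-1)) := by
      calc |∑ j ∈ Finset.range n,
          ((∫ y, d j y ∂(kIter Kl (n-1-j) x)) - ∫ y, d j y ∂πl)|
          ≤ ∑ j ∈ Finset.range n,
            |(∫ y, d j y ∂(kIter Kl (n-1-j) x)) - ∫ y, d j y ∂πl| :=
            Finset.abs_sum_le_sum_abs _ _
        _ ≤ ∑ _j ∈ Finset.range n, M' * ρ^(n-1) := by
            refine Finset.sum_le_sum fun j hj => ?_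
            have hj' := Finset.mem_range.1 hj
            have hidx : (n-1-j) + j = n - 1 := by omega
            calc |(∫ y, d j y ∂(kIter Kl (n-1-j) x)) - ∫ y, d j y ∂πl|
                ≤ M' * ρ^((n-1-j)+j) := hE (n-1-j) j
              _ = M' * ρ^(n-1) := by rw [hidx]
        _ = (n:ℝ) * (M' * ρ^(n-1)) := by
            rw [Finset.sum_const, Finset.card_range, nsmul_eq_mul]
    have hAB_eq : A n - Bq n
        = (∑ j ∈ Finset.range n,
            ((∫ y, d j y ∂(kIter Kl (n-1-j) x)) - ∫ y, d j y ∂πl)) + r n := by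
      rw [hA_def, hBq_def]
      exact hterm n
    calc |A n - Bq n| ≤ |∑ j ∈ Finset.range n,
          ((∫ y, d j y ∂(kIter Kl (n-1-j) x)) - ∫ y, d j y ∂πl)| + |r n| := by
          rw [hAB_eq]; exact abs_add_le _ _
      _ ≤ (n:ℝ) * (M' * ρ^(n-1)) + M * ρ^n := add_le_add hsumE (hr_bdd n)
      _ = M' * ((n:ℝ) * ρ^(n-1)) + M * ρ^n := by ring
  -- geometric partial-sum bounds
  have hgeom_psum : ∀ N, ∑ n ∈ Finset.range N, ρ^n ≤ (1-ρ)⁻¹ := by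
    intro N
    refine le_trans ((summable_geometric_of_lt_one hρ0.le hρ1).sum_le_tsum _
      (fun n _ => by positivity)) ?_
    rw [tsum_geometric_of_lt_one hρ0.le hρ1]
  have hhs : HasSum (fun i : ℕ => ((i:ℝ)+1) * ρ^i) (((1-ρ)^2)⁻¹) := by
    have h1 : HasSum (fun i : ℕ => (i:ℝ) * ρ^i) (ρ / (1-ρ)^2) :=
      hasSum_coe_mul_geometric_of_norm_lt_one
        (by rwa [Real.norm_eq_abs, abs_of_pos hρ0])
    have h2 : HasSum (fun i : ℕ => ρ^i) ((1-ρ)⁻¹) :=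
      hasSum_geometric_of_lt_one hρ0.le hρ1
    have h3 := h1.add h2
    have he : (fun i : ℕ => (i:ℝ)*ρ^i + ρ^i) = fun i : ℕ => ((i:ℝ)+1) * ρ^i := by
      funext i; ring
    rw [he] at h3
    convert h3 using 1
    field_simp
    ring
  have hsum2 : ∀ N, ∑ n ∈ Finset.range N, (n:ℝ) * ρ^(n-1) ≤ ((1-ρ)^2)⁻¹ := by
    intro N
    cases N with
    | zero => simp; positivity
    | succ N =>
      rw [Finset.sum_range_succ' (fun n => (n:ℝ) * ρ^(n-1)) N]
      have he : ∀ i ∈ Finset.range N, ((i:ℕ)+1:ℕ) * ρ^((i+1)-1) = ((i:ℝ)+1) * ρ^i := by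
        intro i _
        push_cast
        norm_num
      simp only [Nat.cast_zero, zero_mul, add_zero]
      calc ∑ i ∈ Finset.range N, ((i:ℕ)+1:ℕ) * ρ^((i+1)-1)
          = ∑ i ∈ Finset.range N, ((i:ℝ)+1) * ρ^i := Finset.sum_congr rfl he
        _ ≤ ((1-ρ)^2)⁻¹ := sum_le_hasSum _ (fun i _ => by positivity) hhs
  -- uniform bound on partial sums of the difference
  have hpartial : ∀ N, |∑ n ∈ Finset.range N, (A n - Bq n)|
      ≤ M' * ((1-ρ)^2)⁻¹ + M * (1-ρ)⁻¹ := by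
    intro N
    calc |∑ n ∈ Finset.range N, (A n - Bq n)|
        ≤ ∑ n ∈ Finset.range N, |A n - Bq n| := Finset.abs_sum_le_sum_abs _ _
      _ ≤ ∑ n ∈ Finset.range N, (M' * ((n:ℝ) * ρ^(n-1)) + M * ρ^n) :=
          Finset.sum_le_sum fun n _ => habs_term n
      _ = M' * (∑ n ∈ Finset.range N, (n:ℝ) * ρ^(n-1))
          + M * (∑ n ∈ Finset.range N, ρ^n) := by
          rw [Finset.sum_add_distrib, Finset.mul_sum, Finset.mul_sum]
      _ ≤ M' * ((1-ρ)^2)⁻¹ + M * (1-ρ)⁻¹ :=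
          add_le_add (mul_le_mul_of_nonneg_left (hsum2 N) hM'0)
            (mul_le_mul_of_nonneg_left (hgeom_psum N) hM0)
  -- pass to the limit
  have hAB : HasSum (fun n => A n - Bq n) ((∑' n, A n) - ∑' n, Bq n) :=
    hA_summ.hasSum.sub hBq_summ.hasSum
  have htend := hAB.tendsto_sum_nat
  have habs : Filter.Tendsto (fun N => |∑ n ∈ Finset.range N, (A n - Bq n)|)
      Filter.atTop (nhds |(∑' n, A n) - ∑' n, Bq n|) :=
    (continuous_abs.tendsto _).comp htend
  have hlim : |(∑' n, A n) - ∑' n, Bq n| ≤ M' * ((1-ρ)^2)⁻¹ + M * (1-ρ)⁻¹ :=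
    le_of_tendsto' habs hpartial
  have hfinal : |(∑' n, A n) - ∑' n, Bq n|
      ≤ (4*C*(C+1)^2 * ((1-ρ)^2)⁻¹ + 2*C*(C+1) * (1-ρ)⁻¹) * B * h^β := by
    refine hlim.trans (le_of_eq ?_)
    rw [hM', hM]; ring
  exact hfinal
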